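/- Using the connection coefficients of Lemma 1 and structure constants of the frame, the curvature operator R(X,Y)Z = ∇_X∇_Y Z - ∇_Y∇_X Z - ∇_{[X,Y]}Z satisfies: g(R(e₁,e₂)e₁,e₂) = -2, g(R(e₁,e₃)e₁,e₃) = 1, g(R(e₁,e₄)e₁,e₄) = 1, g(R(e₂,e₃)e₂,e₃) = 1, g(R(e₂,e₄)e₂,e₄) = 1, and g(R(e₃,e₄)e₃,e₄) = 4. -/

import Mathlib

/-- The connection coefficients `Γᵢⱼᵏ` of Lemma 1 in the orthonormal frame
`{e₁,…,e₄}` on `(F⁴,g)` (0-indexed): `∇_{eᵢ}eⱼ = ∑ₖ Γ i j k • eₖ`. -/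
def Gam : Fin 4 → Fin 4 → Fin 4 → ℝ :=
  ![![![0,0,0,1], ![0,0,1,0], ![0,-1,0,0], ![-1,0,0,0]],
    ![![0,0,1,0], ![0,0,0,-1], ![-1,0,0,0], ![0,1,0,0]],
    ![![0,-1,0,0], ![1,0,0,0], ![0,0,0,2], ![0,0,-2,0]],
    ![![0,0,0,0], ![0,0,0,0], ![0,0,0,0], ![0,0,0,0]]]

/-- Structure constants of the frame, `[eᵢ,eⱼ] = ∑ₖ c i j k • eₖ`, determined by
torsion-freeness: `c i j k = Γ i j k - Γ j i k`. -/
def structC (i j k : Fin 4) : ℝ := Gam i j k - Gam j i k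

/-- The curvature components `Riem i j k l = g(R(eᵢ,eⱼ)eₖ, eₗ)`, where
`R(X,Y)Z = ∇_X∇_Y Z - ∇_Y∇_X Z - ∇_{[X,Y]}Z` and all connection coefficients
are constant in the frame. -/
def Riem (i j k l : Fin 4) : ℝ :=
  (∑ m : Fin 4, (Gam j k m * Gam i m l - Gam i k m * Gam j m l))
    - ∑ m : Fin 4, structC i j m * Gam m k l

/-- The Ricci curvature `Ric(eᵢ,eⱼ) = ∑ₐ g(R(eᵢ,eₐ)eₐ, eⱼ)` in the frame. -/
def RicF (i j : Fin 4) : ℝ := ∑ a : Fin 4, Riem i a a j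

/-- The sectional curvature components of `(F⁴,g)`:
`g(R(e₁,e₂)e₁,e₂) = -2`, `g(R(e₁,e₃)e₁,e₃) = 1`, `g(R(e₁,e₄)e₁,e₄) = 1`,
`g(R(e₂,e₃)e₂,e₃) = 1`, `g(R(e₂,e₄)e₂,e₄) = 1`, `g(R(e₃,e₄)e₃,e₄) = 4`. -/
theorem sectional_curvature_components :
    Riem 0 1 0 1 = -2 ∧ Riem 0 2 0 2 = 1 ∧ Riem 0 3 0 3 = 1 ∧
    Riem 1 2 1 2 = 1 ∧ Riem 1 3 1 3 = 1 ∧ Riem 2 3 2 3 = 4 := by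
  refine ⟨?_,?_,?_,?_,?_,?_⟩ <;>
  simp [Riem, structC, Gam, Fin.sum_univ_succ] <;> norm_num
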